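/- Let c > 0, ξ ∈ (0,1), K ≥ 1, and 0 < p_1 < ⋯ < p_{K+1} ≤ 1. Then the symmetric K×K matrix Σ defined by Σ_{kk} = σ²(p_k, p_{k+1}) and Σ_{jk} = Σ_{kj} = −c²ξ² [(p_{j+1}^(1−ξ) − p_j^(1−ξ))/(1−ξ)] [ (p_{k+1}^(−ξ) − p_k^(−ξ))/ξ + (p_{k+1}^(1−ξ) − p_k^(1−ξ))/(1−ξ) ] for j < k is positive definite. -/

import Mathlib

open Real

/-- `T(p,q)`, equal to `(q^(1−2ξ) − p^(1−2ξ))/(1−2ξ)` if `ξ ≠ 1/2` and `log(q/p)` if `ξ = 1/2`. -/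
noncomputable def TPQ (ξ p q : ℝ) : ℝ :=
  if ξ = 1 / 2 then Real.log (q / p) else (q ^ (1 - 2 * ξ) - p ^ (1 - 2 * ξ)) / (1 - 2 * ξ)

/-- `σ²(p,q)` from the paper's Lemma 2. -/
noncomputable def sigma2PQ (c ξ p q : ℝ) : ℝ :=
  2 * c ^ 2 * ξ ^ 2 / (1 - ξ) *
    (TPQ ξ p q + p ^ (1 - ξ) * (q ^ (-ξ) - p ^ (-ξ)) / ξ +
      (2 * p ^ (1 - ξ) * q ^ (1 - ξ) - p ^ (2 - 2 * ξ) - q ^ (2 - 2 * ξ)) / (2 - 2 * ξ))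

/-- Off-diagonal covariance term (0-based indices: paper `p_j` is `p (j+1)`). -/
noncomputable def offDiag (c ξ : ℝ) (p : ℕ → ℝ) (j k : ℕ) : ℝ :=
  -(c ^ 2) * ξ ^ 2 * ((p (j + 2) ^ (1 - ξ) - p (j + 1) ^ (1 - ξ)) / (1 - ξ)) *
    ((p (k + 2) ^ (-ξ) - p (k + 1) ^ (-ξ)) / ξ +
      (p (k + 2) ^ (1 - ξ) - p (k + 1) ^ (1 - ξ)) / (1 - ξ))

/-- The symmetric covariance matrix `Σ` (Lean index `k : Fin K` is paper index `k+1`). -/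
noncomputable def SigmaMat (c ξ : ℝ) (K : ℕ) (p : ℕ → ℝ) : Matrix (Fin K) (Fin K) ℝ :=
  fun j k =>
    if j = k then sigma2PQ c ξ (p ((j : ℕ) + 1)) (p ((j : ℕ) + 2))
    else if (j : ℕ) < (k : ℕ) then offDiag c ξ p j k else offDiag c ξ p k j

/-! ### Auxiliary definitions for the proof

The matrix `Σ` is the covariance matrix of the Gaussian vector
`Y_k = c ξ ∫_{p_{k+1}}^{p_{k+2}} s^{-ξ-1} B_s ds` where `B` is a Brownian bridge.
Decomposing along independent increments of the underlying Brownian motion gives an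
explicit representation of the quadratic form as a positive combination of squares. -/

noncomputable def xx (ξ : ℝ) (p : ℕ → ℝ) (i : ℕ) : ℝ := p i ^ (-ξ)
noncomputable def AA (ξ : ℝ) (p : ℕ → ℝ) (m : ℕ) : ℝ :=
  (p (m+2) ^ (1-ξ) - p (m+1) ^ (1-ξ)) / (1-ξ)
noncomputable def vv (ξ : ℝ) (p : ℕ → ℝ) (m : ℕ) : ℝ := -ξ * AA ξ p m
noncomputable def gg (ξ : ℝ) (p : ℕ → ℝ) (m : ℕ) : ℝ := xx ξ p (m+1) - xx ξ p (m+2) + vv ξ p m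
noncomputable def aa (ξ : ℝ) (p : ℕ → ℝ) (m k : ℕ) : ℝ :=
  if m < k then gg ξ p k else if m = k then vv ξ p k - xx ξ p (k+2) else vv ξ p k
noncomputable def NN (ξ : ℝ) (K : ℕ) (p : ℕ → ℝ) (j k : ℕ) : ℝ :=
  p 1 * gg ξ p j * gg ξ p k + (1 - p (K+1)) * vv ξ p j * vv ξ p k
  + (∑ m ∈ Finset.range K, (p (m+2) - p (m+1)) * aa ξ p m j * aa ξ p m k)
  + AA ξ p j * aa ξ p j k + AA ξ p k * aa ξ p k j
  + (if j = k then TPQ ξ (p (j+1)) (p (j+2)) else 0)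

lemma rp1 {t ξ : ℝ} (ht : 0 < t) : t ^ (1 - ξ) = t * t ^ (-ξ) := by
  rw [show (1 - ξ) = 1 + (-ξ) by ring, Real.rpow_add ht, Real.rpow_one]

lemma rp2 {t ξ : ℝ} (ht : 0 < t) : t ^ (2 - 2*ξ) = (t * t ^ (-ξ))^2 := by
  rw [show (2 - 2*ξ) = (1-ξ)*2 by ring, Real.rpow_mul ht.le,
    show ((2:ℝ) = ((2:ℕ):ℝ)) by norm_num, Real.rpow_natCast, rp1 ht]

lemma rp3 {t ξ : ℝ} (ht : 0 < t) : t ^ (1 - 2*ξ) = t * (t ^ (-ξ))^2 := by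
  rw [show (1 - 2*ξ) = 1 + ((-ξ)*2) by ring, Real.rpow_add ht, Real.rpow_one,
    Real.rpow_mul ?_, show ((2:ℝ) = ((2:ℕ):ℝ)) by norm_num, Real.rpow_natCast]
  positivity

lemma rpdec {a b ξ : ℝ} (hξ : 0 < ξ) (ha : 0 < a) (hab : a < b) : b ^ (-ξ) < a ^ (-ξ) := by
  rw [Real.rpow_neg ha.le, Real.rpow_neg (ha.trans hab).le]
  exact inv_strictAnti₀ (Real.rpow_pos_of_pos ha ξ) (Real.rpow_lt_rpow ha.le hab hξ)

/-- Strict Cauchy–Schwarz: `(∫ s^{-ξ})² < (q-p) ∫ s^{-2ξ}` on `(p,q)`. -/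
lemma cs {ξ p q : ℝ} (hξ0 : 0 < ξ) (hξ1 : ξ < 1) (hp : 0 < p) (hpq : p < q) :
    ((q ^ (1-ξ) - p ^ (1-ξ)) / (1-ξ))^2 < (q - p) * TPQ ξ p q := by
  have hq : 0 < q := hp.trans hpq
  have h0 : (0:ℝ) ∉ Set.uIcc p q := by
    rw [Set.uIcc_of_le hpq.le]; intro h; exact absurd (Set.mem_Icc.mp h).1 (not_le.mpr hp)
  obtain ⟨A, hAdef⟩ : ∃ A : ℝ, A = (q ^ (1-ξ) - p ^ (1-ξ)) / (1-ξ) := ⟨_, rfl⟩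
  rw [← hAdef]
  obtain ⟨m, hmdef⟩ : ∃ m : ℝ, m = A / (q - p) := ⟨_, rfl⟩
  have hgcont : ∀ (a b : ℝ), p ≤ a → a ≤ b → b ≤ q →
      IntervalIntegrable (fun s : ℝ => (s ^ (-ξ) - m)^2) MeasureTheory.volume a b := by
    intro a b hpa hab hbq
    apply ContinuousOn.intervalIntegrable
    apply ContinuousOn.pow
    apply ContinuousOn.sub _ continuousOn_const
    apply ContinuousOn.rpow_const continuousOn_id
    intro s hs
    rw [Set.uIcc_of_le hab] at hs
    exact Or.inl (ne_of_gt (lt_of_lt_of_le hp (hpa.trans hs.1)))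
  have hcont : ∀ r : ℝ, IntervalIntegrable (fun s : ℝ => s ^ r) MeasureTheory.volume p q := by
    intro r
    apply ContinuousOn.intervalIntegrable
    apply ContinuousOn.rpow_const continuousOn_id
    intro s hs
    rw [Set.uIcc_of_le hpq.le] at hs
    exact Or.inl (ne_of_gt (lt_of_lt_of_le hp hs.1))
  have hA : ∫ s in p..q, s ^ (-ξ) = A := by
    rw [integral_rpow (Or.inl (by linarith : (-1:ℝ) < -ξ)), hAdef,
      show -ξ + 1 = 1 - ξ by ring]
  have hT : ∫ s in p..q, (s ^ (-ξ))^2 = TPQ ξ p q := by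
    have hcg : Set.EqOn (fun s : ℝ => (s ^ (-ξ))^2) (fun s : ℝ => s ^ (-2*ξ)) (Set.uIcc p q) := by
      intro s hs
      rw [Set.uIcc_of_le hpq.le] at hs
      simp only
      rw [← Real.rpow_natCast (s ^ (-ξ)) 2, ← Real.rpow_mul (le_of_lt (hp.trans_le hs.1))]
      norm_num
      ring_nf
    rw [intervalIntegral.integral_congr hcg]
    by_cases h : ξ = 1/2
    · subst h
      rw [show (-2*(1/2:ℝ)) = -1 by norm_num, TPQ, if_pos rfl]
      simp only [Real.rpow_neg_one]
      exact integral_inv h0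
    · rw [integral_rpow (Or.inr ⟨by intro hc; apply h; linarith, h0⟩), TPQ, if_neg h,
        show -2*ξ + 1 = 1 - 2*ξ by ring]
  have hsq : ∀ s : ℝ, (s ^ (-ξ) - m)^2 = (s ^ (-ξ))^2 - (2*m) * s ^ (-ξ) + m^2 :=
    fun s => by ring
  have hsqint : IntervalIntegrable (fun s : ℝ => (s ^ (-ξ))^2) MeasureTheory.volume p q := by
    apply ContinuousOn.intervalIntegrable
    apply ContinuousOn.pow
    apply ContinuousOn.rpow_const continuousOn_id
    intro s hs
    rw [Set.uIcc_of_le hpq.le] at hs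
    exact Or.inl (ne_of_gt (lt_of_lt_of_le hp hs.1))
  have hI : ∫ s in p..q, (s ^ (-ξ) - m)^2
      = TPQ ξ p q - (2*m) * A + m^2 * (q - p) := by
    simp only [hsq]
    rw [intervalIntegral.integral_add (hsqint.sub ((hcont (-ξ)).const_mul (2*m)))
        intervalIntegrable_const,
      intervalIntegral.integral_sub hsqint ((hcont (-ξ)).const_mul (2*m)),
      intervalIntegral.integral_const_mul, hA, hT, intervalIntegral.integral_const,
      smul_eq_mul]
    ring
  obtain ⟨c₀, hc0⟩ : ∃ c₀ : ℝ, c₀ = (p + q) / 2 := ⟨_, rfl⟩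
  have hpc : p < c₀ := by rw [hc0]; linarith
  have hcq : c₀ < q := by rw [hc0]; linarith
  have hsplit : ∫ s in p..q, (s ^ (-ξ) - m)^2
      = (∫ s in p..c₀, (s ^ (-ξ) - m)^2) + ∫ s in c₀..q, (s ^ (-ξ) - m)^2 :=
    (intervalIntegral.integral_add_adjacent_intervals (hgcont p c₀ le_rfl hpc.le hcq.le)
      (hgcont c₀ q hpc.le hcq.le le_rfl)).symm
  have hIpos : 0 < ∫ s in p..q, (s ^ (-ξ) - m)^2 := by
    rcases le_or_gt m (c₀ ^ (-ξ)) with hm | hm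
    · rw [hsplit]
      have h1 : 0 < ∫ s in p..c₀, (s ^ (-ξ) - m)^2 := by
        apply intervalIntegral.intervalIntegral_pos_of_pos_on
          (hgcont p c₀ le_rfl hpc.le hcq.le) _ hpc
        intro s hs
        have : c₀ ^ (-ξ) < s ^ (-ξ) := rpdec hξ0 (hp.trans hs.1) hs.2
        have h3 : 0 < s ^ (-ξ) - m := by linarith
        exact pow_pos h3 2
      have h2 : 0 ≤ ∫ s in c₀..q, (s ^ (-ξ) - m)^2 :=
        intervalIntegral.integral_nonneg hcq.le (fun s _ => sq_nonneg _)
      linarith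
    · rw [hsplit]
      have h1 : 0 < ∫ s in c₀..q, (s ^ (-ξ) - m)^2 := by
        apply intervalIntegral.intervalIntegral_pos_of_pos_on
          (hgcont c₀ q hpc.le hcq.le le_rfl) _ hcq
        intro s hs
        have : s ^ (-ξ) < c₀ ^ (-ξ) := rpdec hξ0 (hp.trans hpc) hs.1
        have : s ^ (-ξ) - m < 0 := by linarith
        nlinarith [mul_pos_of_neg_of_neg this this]
      have h2 : 0 ≤ ∫ s in p..c₀, (s ^ (-ξ) - m)^2 :=
        intervalIntegral.integral_nonneg hpc.le (fun s _ => sq_nonneg _)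
      linarith
  rw [hI] at hIpos
  have hqp : (0:ℝ) < q - p := by linarith
  have hm' : m * (q - p) = A := by rw [hmdef]; field_simp
  nlinarith [hIpos, hqp, hm']

lemma tele (p : ℕ → ℝ) (a : ℕ) : ∀ b, a ≤ b →
    ∑ m ∈ Finset.Ico a b, (p (m+2) - p (m+1)) = p (b+1) - p (a+1) := by
  intro b hb
  induction b, hb using Nat.le_induction with
  | base => simp
  | succ b hb ih => rw [Finset.sum_Ico_succ_top hb, ih]; ring

lemma offdiag_entry (c ξ : ℝ) (K : ℕ) (p : ℕ → ℝ) (hξ0 : 0 < ξ) (hξ1 : ξ < 1)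
    (j k : ℕ) (hjk : j < k) (hk : k < K)
    (h1 : 0 < p (j+1)) (h2 : 0 < p (j+2)) (h3 : 0 < p (k+1)) (h4 : 0 < p (k+2)) :
    offDiag c ξ p j k = c^2 * NN ξ K p j k := by
  have hone : (1:ℝ) - ξ ≠ 0 := by linarith
  have hxne : ξ ≠ 0 := ne_of_gt hξ0
  have hjK : j ≤ K := le_of_lt (hjk.trans hk)
  have hj1k : j + 1 ≤ k := hjk
  have hkK : k ≤ K := hk.le
  have hsum : ∑ m ∈ Finset.range K, (p (m+2) - p (m+1)) * aa ξ p m j * aa ξ p m k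
      = (p (j+1) - p 1) * (gg ξ p j * gg ξ p k)
        + (p (j+2) - p (j+1)) * ((vv ξ p j - xx ξ p (j+2)) * gg ξ p k)
        + (p (k+1) - p (j+2)) * (vv ξ p j * gg ξ p k)
        + (p (k+2) - p (k+1)) * (vv ξ p j * (vv ξ p k - xx ξ p (k+2)))
        + (p (K+1) - p (k+2)) * (vv ξ p j * vv ξ p k) := by
    rw [Finset.range_eq_Ico,
      ← Finset.sum_Ico_consecutive _ (Nat.zero_le j) hjK,
      ← Finset.sum_Ico_consecutive _ (Nat.le_succ j) (Nat.succ_le_of_lt (hjk.trans_le hkK)),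
      ← Finset.sum_Ico_consecutive _ hj1k hkK,
      ← Finset.sum_Ico_consecutive _ (Nat.le_succ k) (Nat.succ_le_of_lt hk)]
    rw [Nat.Ico_succ_singleton, Nat.Ico_succ_singleton, Finset.sum_singleton,
      Finset.sum_singleton]
    have r1 : ∑ m ∈ Finset.Ico 0 j, (p (m+2) - p (m+1)) * aa ξ p m j * aa ξ p m k
        = (p (j+1) - p 1) * (gg ξ p j * gg ξ p k) := by
      rw [show (p (j+1) - p 1) = ∑ m ∈ Finset.Ico 0 j, (p (m+2) - p (m+1)) from
        (tele p 0 j (Nat.zero_le j)).symm, Finset.sum_mul]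
      apply Finset.sum_congr rfl
      intro m hm
      have hmj : m < j := (Finset.mem_Ico.mp hm).2
      rw [aa, if_pos hmj, aa, if_pos (hmj.trans hjk)]; ring
    have r2 : (p (j+2) - p (j+1)) * aa ξ p j j * aa ξ p j k
        = (p (j+2) - p (j+1)) * ((vv ξ p j - xx ξ p (j+2)) * gg ξ p k) := by
      rw [aa, if_neg (lt_irrefl j), if_pos rfl, aa, if_pos hjk]; ring
    have r3 : ∑ m ∈ Finset.Ico (j+1) k, (p (m+2) - p (m+1)) * aa ξ p m j * aa ξ p m k
        = (p (k+1) - p (j+2)) * (vv ξ p j * gg ξ p k) := by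
      rw [show (p (k+1) - p (j+2)) = ∑ m ∈ Finset.Ico (j+1) k, (p (m+2) - p (m+1)) from
        (tele p (j+1) k hj1k).symm, Finset.sum_mul]
      apply Finset.sum_congr rfl
      intro m hm
      obtain ⟨hmj, hmk⟩ := Finset.mem_Ico.mp hm
      have hmj' : ¬ (m < j) := by omega
      have hmj'' : ¬ (m = j) := by omega
      rw [aa, if_neg hmj', if_neg hmj'', aa, if_pos hmk]; ring
    have r4 : (p (k+2) - p (k+1)) * aa ξ p k j * aa ξ p k k
        = (p (k+2) - p (k+1)) * (vv ξ p j * (vv ξ p k - xx ξ p (k+2))) := by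
      have : ¬ (k < j) := by omega
      have h' : ¬ (k = j) := by omega
      rw [aa, if_neg this, if_neg h', aa, if_neg (lt_irrefl k), if_pos rfl]; ring
    have r5 : ∑ m ∈ Finset.Ico (k+1) K, (p (m+2) - p (m+1)) * aa ξ p m j * aa ξ p m k
        = (p (K+1) - p (k+2)) * (vv ξ p j * vv ξ p k) := by
      rw [show (p (K+1) - p (k+2)) = ∑ m ∈ Finset.Ico (k+1) K, (p (m+2) - p (m+1)) from
        (tele p (k+1) K (Nat.succ_le_of_lt hk)).symm, Finset.sum_mul]
      apply Finset.sum_congr rfl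
      intro m hm
      obtain ⟨hmk, hmK⟩ := Finset.mem_Ico.mp hm
      have n1 : ¬ (m < j) := by omega
      have n2 : ¬ (m = j) := by omega
      have n3 : ¬ (m < k) := by omega
      have n4 : ¬ (m = k) := by omega
      rw [aa, if_neg n1, if_neg n2, aa, if_neg n3, if_neg n4]; ring
    rw [r1, r2, r3, r4, r5]; ring
  rw [NN, hsum, if_neg (by omega : ¬ j = k)]
  rw [aa, if_pos hjk]
  rw [show aa ξ p k j = vv ξ p j by rw [aa, if_neg (by omega), if_neg (by omega)]]
  simp only [_root_.offDiag, gg, vv, AA, xx]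
  rw [rp1 h1, rp1 h2, rp1 h3, rp1 h4]
  field_simp
  ring

lemma diag_entry (c ξ : ℝ) (K : ℕ) (p : ℕ → ℝ) (hξ0 : 0 < ξ) (hξ1 : ξ < 1)
    (j : ℕ) (hj : j < K) (h1 : 0 < p (j+1)) (h2 : 0 < p (j+2)) :
    sigma2PQ c ξ (p (j+1)) (p (j+2)) = c^2 * NN ξ K p j j := by
  have hone : (1:ℝ) - ξ ≠ 0 := by linarith
  have hxne : ξ ≠ 0 := ne_of_gt hξ0
  have htwo : (2:ℝ) - 2*ξ ≠ 0 := by intro h; apply hone; linarith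
  have hsum : ∑ m ∈ Finset.range K, (p (m+2) - p (m+1)) * aa ξ p m j * aa ξ p m j
      = (p (j+1) - p 1) * (gg ξ p j * gg ξ p j)
        + (p (j+2) - p (j+1)) * ((vv ξ p j - xx ξ p (j+2)) * (vv ξ p j - xx ξ p (j+2)))
        + (p (K+1) - p (j+2)) * (vv ξ p j * vv ξ p j) := by
    rw [Finset.range_eq_Ico,
      ← Finset.sum_Ico_consecutive _ (Nat.zero_le j) hj.le,
      ← Finset.sum_Ico_consecutive _ (Nat.le_succ j) (Nat.succ_le_of_lt hj),
      Nat.Ico_succ_singleton, Finset.sum_singleton]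
    have r1 : ∑ m ∈ Finset.Ico 0 j, (p (m+2) - p (m+1)) * aa ξ p m j * aa ξ p m j
        = (p (j+1) - p 1) * (gg ξ p j * gg ξ p j) := by
      rw [show (p (j+1) - p 1) = ∑ m ∈ Finset.Ico 0 j, (p (m+2) - p (m+1)) from
        (tele p 0 j (Nat.zero_le j)).symm, Finset.sum_mul]
      refine Finset.sum_congr rfl fun m hm => ?_
      have hmj : m < j := (Finset.mem_Ico.mp hm).2
      rw [aa, if_pos hmj]; ring
    have r2 : (p (j+2) - p (j+1)) * aa ξ p j j * aa ξ p j j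
        = (p (j+2) - p (j+1)) * ((vv ξ p j - xx ξ p (j+2)) * (vv ξ p j - xx ξ p (j+2))) := by
      rw [aa, if_neg (lt_irrefl j), if_pos rfl]; ring
    have r3 : ∑ m ∈ Finset.Ico (j+1) K, (p (m+2) - p (m+1)) * aa ξ p m j * aa ξ p m j
        = (p (K+1) - p (j+2)) * (vv ξ p j * vv ξ p j) := by
      rw [show (p (K+1) - p (j+2)) = ∑ m ∈ Finset.Ico (j+1) K, (p (m+2) - p (m+1)) from
        (tele p (j+1) K (Nat.succ_le_of_lt hj)).symm, Finset.sum_mul]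
      refine Finset.sum_congr rfl fun m hm => ?_
      obtain ⟨hmj, hmK⟩ := Finset.mem_Ico.mp hm
      have n1 : ¬ (m < j) := by omega
      have n2 : ¬ (m = j) := by omega
      rw [aa, if_neg n1, if_neg n2]; ring
    rw [r1, r2, r3]; ring
  rw [NN, hsum, if_pos rfl]
  rw [show aa ξ p j j = vv ξ p j - xx ξ p (j+2) by rw [aa, if_neg (lt_irrefl j), if_pos rfl]]
  by_cases hhalf : ξ = 1/2
  · subst hhalf
    simp only [sigma2PQ, gg, vv, AA, xx]
    rw [show TPQ (1/2) (p (j+1)) (p (j+2)) = Real.log (p (j+2) / p (j+1)) from if_pos rfl]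
    rw [rp2 h1, rp2 h2, rp1 h1, rp1 h2]
    set X := p (j+1) ^ (-(1/2 : ℝ)) with hX
    set Y := p (j+2) ^ (-(1/2 : ℝ)) with hY
    set L := Real.log (p (j+2) / p (j+1)) with hL
    have hX1 : p (j+1) * X^2 = 1 := by
      rw [hX, ← Real.rpow_natCast _ 2, ← Real.rpow_mul h1.le]
      norm_num
      rw [Real.rpow_neg_one]
      exact mul_inv_cancel₀ (ne_of_gt h1)
    have hY1 : p (j+2) * Y^2 = 1 := by
      rw [hY, ← Real.rpow_natCast _ 2, ← Real.rpow_mul h2.le]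
      norm_num
      rw [Real.rpow_neg_one]
      exact mul_inv_cancel₀ (ne_of_gt h2)
    field_simp
    linear_combination 3*c^2*hY1 - 3*c^2*hX1
  · have h12 : (1:ℝ) - 2*ξ ≠ 0 := fun h => hhalf (by linarith)
    simp only [sigma2PQ, gg, vv, AA, xx]
    rw [show TPQ ξ (p (j+1)) (p (j+2))
        = ((p (j+2)) ^ (1 - 2*ξ) - (p (j+1)) ^ (1 - 2*ξ)) / (1 - 2*ξ) from if_neg hhalf]
    rw [rp3 h1, rp3 h2, rp2 h1, rp2 h2, rp1 h1, rp1 h2]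
    set X := p (j+1) ^ (-ξ) with hX
    set Y := p (j+2) ^ (-ξ) with hY
    field_simp
    ring

lemma key (ξ : ℝ) (K : ℕ) (p : ℕ → ℝ) (ζ : ℕ → ℝ) :
    ∑ j ∈ Finset.range K, ∑ k ∈ Finset.range K, ζ j * NN ξ K p j k * ζ k
    = p 1 * (∑ j ∈ Finset.range K, ζ j * gg ξ p j)^2
      + (1 - p (K+1)) * (∑ j ∈ Finset.range K, ζ j * vv ξ p j)^2
      + ∑ m ∈ Finset.range K,
          ((p (m+2) - p (m+1)) * (∑ k ∈ Finset.range K, ζ k * aa ξ p m k)^2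
           + 2 * AA ξ p m * ζ m * (∑ k ∈ Finset.range K, ζ k * aa ξ p m k)
           + ζ m^2 * TPQ ξ (p (m+1)) (p (m+2))) := by
  set R := Finset.range K with hR
  have hpoint : ∀ j k : ℕ, ζ j * NN ξ K p j k * ζ k
      = p 1 * (ζ j * gg ξ p j) * (ζ k * gg ξ p k)
        + (1 - p (K+1)) * (ζ j * vv ξ p j) * (ζ k * vv ξ p k)
        + (∑ m ∈ R, (p (m+2) - p (m+1)) * (ζ j * aa ξ p m j) * (ζ k * aa ξ p m k))
        + AA ξ p j * ζ j * (ζ k * aa ξ p j k)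
        + AA ξ p k * ζ k * (ζ j * aa ξ p k j)
        + (if j = k then ζ j * ζ k * TPQ ξ (p (j+1)) (p (j+2)) else 0) := by
    intro j k
    rw [NN]
    have h6 : ζ j * ζ k * (if j = k then TPQ ξ (p (j+1)) (p (j+2)) else 0)
        = (if j = k then ζ j * ζ k * TPQ ξ (p (j+1)) (p (j+2)) else 0) := by
      split_ifs <;> ring
    have h3 : ζ j * ζ k * (∑ m ∈ R, (p (m+2) - p (m+1)) * aa ξ p m j * aa ξ p m k)
        = ∑ m ∈ R, (p (m+2) - p (m+1)) * (ζ j * aa ξ p m j) * (ζ k * aa ξ p m k) := by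
      rw [Finset.mul_sum]
      exact Finset.sum_congr rfl fun m _ => by ring
    calc ζ j * (p 1 * gg ξ p j * gg ξ p k + (1 - p (K+1)) * vv ξ p j * vv ξ p k
          + (∑ m ∈ R, (p (m+2) - p (m+1)) * aa ξ p m j * aa ξ p m k)
          + AA ξ p j * aa ξ p j k + AA ξ p k * aa ξ p k j
          + (if j = k then TPQ ξ (p (j+1)) (p (j+2)) else 0)) * ζ k
        = p 1 * (ζ j * gg ξ p j) * (ζ k * gg ξ p k)
          + (1 - p (K+1)) * (ζ j * vv ξ p j) * (ζ k * vv ξ p k)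
          + ζ j * ζ k * (∑ m ∈ R, (p (m+2) - p (m+1)) * aa ξ p m j * aa ξ p m k)
          + AA ξ p j * ζ j * (ζ k * aa ξ p j k)
          + AA ξ p k * ζ k * (ζ j * aa ξ p k j)
          + ζ j * ζ k * (if j = k then TPQ ξ (p (j+1)) (p (j+2)) else 0) := by ring
      _ = _ := by rw [h6, h3]
  calc ∑ j ∈ R, ∑ k ∈ R, ζ j * NN ξ K p j k * ζ k
      = ∑ j ∈ R, ∑ k ∈ R,
          (p 1 * (ζ j * gg ξ p j) * (ζ k * gg ξ p k)
           + (1 - p (K+1)) * (ζ j * vv ξ p j) * (ζ k * vv ξ p k)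
           + (∑ m ∈ R, (p (m+2) - p (m+1)) * (ζ j * aa ξ p m j) * (ζ k * aa ξ p m k))
           + AA ξ p j * ζ j * (ζ k * aa ξ p j k)
           + AA ξ p k * ζ k * (ζ j * aa ξ p k j)
           + (if j = k then ζ j * ζ k * TPQ ξ (p (j+1)) (p (j+2)) else 0)) :=
        Finset.sum_congr rfl fun j _ => Finset.sum_congr rfl fun k _ => hpoint j k
    _ = (∑ j ∈ R, ∑ k ∈ R, p 1 * (ζ j * gg ξ p j) * (ζ k * gg ξ p k))
        + (∑ j ∈ R, ∑ k ∈ R, (1 - p (K+1)) * (ζ j * vv ξ p j) * (ζ k * vv ξ p k))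
        + (∑ j ∈ R, ∑ k ∈ R, ∑ m ∈ R,
            (p (m+2) - p (m+1)) * (ζ j * aa ξ p m j) * (ζ k * aa ξ p m k))
        + (∑ j ∈ R, ∑ k ∈ R, AA ξ p j * ζ j * (ζ k * aa ξ p j k))
        + (∑ j ∈ R, ∑ k ∈ R, AA ξ p k * ζ k * (ζ j * aa ξ p k j))
        + (∑ j ∈ R, ∑ k ∈ R,
            (if j = k then ζ j * ζ k * TPQ ξ (p (j+1)) (p (j+2)) else 0)) := by
        simp only [Finset.sum_add_distrib]
    _ = _ := by
        have H1 : ∑ j ∈ R, ∑ k ∈ R, p 1 * (ζ j * gg ξ p j) * (ζ k * gg ξ p k)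
            = p 1 * (∑ j ∈ R, ζ j * gg ξ p j)^2 := by
          rw [sq, Finset.sum_mul_sum, Finset.mul_sum]
          exact Finset.sum_congr rfl fun j _ => by
            rw [Finset.mul_sum]; exact Finset.sum_congr rfl fun k _ => by ring
        have H2 : ∑ j ∈ R, ∑ k ∈ R, (1 - p (K+1)) * (ζ j * vv ξ p j) * (ζ k * vv ξ p k)
            = (1 - p (K+1)) * (∑ j ∈ R, ζ j * vv ξ p j)^2 := by
          rw [sq, Finset.sum_mul_sum, Finset.mul_sum]
          exact Finset.sum_congr rfl fun j _ => by
            rw [Finset.mul_sum]; exact Finset.sum_congr rfl fun k _ => by ring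
        have H3 : ∑ j ∈ R, ∑ k ∈ R, ∑ m ∈ R,
              (p (m+2) - p (m+1)) * (ζ j * aa ξ p m j) * (ζ k * aa ξ p m k)
            = ∑ m ∈ R, (p (m+2) - p (m+1)) * (∑ k ∈ R, ζ k * aa ξ p m k)^2 := by
          calc ∑ j ∈ R, ∑ k ∈ R, ∑ m ∈ R,
                (p (m+2) - p (m+1)) * (ζ j * aa ξ p m j) * (ζ k * aa ξ p m k)
              = ∑ j ∈ R, ∑ m ∈ R, ∑ k ∈ R,
                (p (m+2) - p (m+1)) * (ζ j * aa ξ p m j) * (ζ k * aa ξ p m k) :=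
                Finset.sum_congr rfl fun j _ => Finset.sum_comm
            _ = ∑ m ∈ R, ∑ j ∈ R, ∑ k ∈ R,
                (p (m+2) - p (m+1)) * (ζ j * aa ξ p m j) * (ζ k * aa ξ p m k) :=
                Finset.sum_comm
            _ = _ := by
                refine Finset.sum_congr rfl fun m _ => ?_
                rw [sq, Finset.sum_mul_sum, Finset.mul_sum]
                exact Finset.sum_congr rfl fun j _ => by
                  rw [Finset.mul_sum]; exact Finset.sum_congr rfl fun k _ => by ring
        have H4 : ∑ j ∈ R, ∑ k ∈ R, AA ξ p j * ζ j * (ζ k * aa ξ p j k)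
            = ∑ m ∈ R, AA ξ p m * ζ m * (∑ k ∈ R, ζ k * aa ξ p m k) :=
          Finset.sum_congr rfl fun j _ => by rw [Finset.mul_sum]
        have H5 : ∑ j ∈ R, ∑ k ∈ R, AA ξ p k * ζ k * (ζ j * aa ξ p k j)
            = ∑ m ∈ R, AA ξ p m * ζ m * (∑ k ∈ R, ζ k * aa ξ p m k) := by
          rw [Finset.sum_comm]
          exact Finset.sum_congr rfl fun k _ => by rw [Finset.mul_sum]
        have H6 : ∑ j ∈ R, ∑ k ∈ R,
              (if j = k then ζ j * ζ k * TPQ ξ (p (j+1)) (p (j+2)) else 0)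
            = ∑ m ∈ R, ζ m^2 * TPQ ξ (p (m+1)) (p (m+2)) := by
          refine Finset.sum_congr rfl fun j hj => ?_
          rw [Finset.sum_ite_eq R j (fun k => ζ j * ζ k * TPQ ξ (p (j+1)) (p (j+2))),
            if_pos hj]
          ring
        have H7 : ∑ m ∈ R,
              ((p (m+2) - p (m+1)) * (∑ k ∈ R, ζ k * aa ξ p m k)^2
               + 2 * AA ξ p m * ζ m * (∑ k ∈ R, ζ k * aa ξ p m k)
               + ζ m^2 * TPQ ξ (p (m+1)) (p (m+2)))
            = (∑ m ∈ R, (p (m+2) - p (m+1)) * (∑ k ∈ R, ζ k * aa ξ p m k)^2)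
              + ((∑ m ∈ R, AA ξ p m * ζ m * (∑ k ∈ R, ζ k * aa ξ p m k))
                 + (∑ m ∈ R, AA ξ p m * ζ m * (∑ k ∈ R, ζ k * aa ξ p m k)))
              + ∑ m ∈ R, ζ m^2 * TPQ ξ (p (m+1)) (p (m+2)) := by
          rw [← Finset.sum_add_distrib, ← Finset.sum_add_distrib, ← Finset.sum_add_distrib]
          exact Finset.sum_congr rfl fun m _ => by ring
        rw [H1, H2, H3, H4, H5, H6, H7]
        ring

lemma NN_symm (ξ : ℝ) (K : ℕ) (p : ℕ → ℝ) (j k : ℕ) : NN ξ K p j k = NN ξ K p k j := by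
  by_cases h : j = k
  · subst h; rfl
  · rw [NN, NN, if_neg h, if_neg (fun h' => h h'.symm)]
    have : ∑ m ∈ Finset.range K, (p (m+2) - p (m+1)) * aa ξ p m j * aa ξ p m k
        = ∑ m ∈ Finset.range K, (p (m+2) - p (m+1)) * aa ξ p m k * aa ξ p m j :=
      Finset.sum_congr rfl fun m _ => by ring
    rw [this]; ring

/-- The covariance matrix `Σ` is positive definite:
`zᵀ Σ z > 0` for every nonzero `z ∈ ℝ^K`. -/
theorem stmt5 (c ξ : ℝ) (K : ℕ) (hc : 0 < c) (hξ0 : 0 < ξ) (hξ1 : ξ < 1) (hK : 1 ≤ K)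
    (p : ℕ → ℝ) (hp0 : 0 < p 1) (hpmono : ∀ k, 1 ≤ k → k ≤ K → p k < p (k + 1))
    (hp1 : p (K + 1) ≤ 1) :
    ∀ z : Fin K → ℝ, z ≠ 0 → 0 < ∑ j, ∑ k, z j * SigmaMat c ξ K p j k * z k := by
  intro z hz
  -- positivity of the grid points
  have hpos : ∀ m, m ≤ K → 0 < p (m+1) := by
    intro m hm
    induction m with
    | zero => exact hp0
    | succ n ih =>
      exact lt_trans (ih (by omega)) (hpmono (n+1) (by omega) (by omega))
  have hdel : ∀ m, m < K → p (m+1) < p (m+2) := fun m hm =>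
    hpmono (m+1) (by omega) (by omega)
  -- entrywise identity
  have hentry : ∀ j k : Fin K, SigmaMat c ξ K p j k = c^2 * NN ξ K p (j:ℕ) (k:ℕ) := by
    intro j k
    rw [SigmaMat]
    by_cases h : j = k
    · subst h
      rw [if_pos rfl]
      exact diag_entry c ξ K p hξ0 hξ1 j j.isLt (hpos _ (le_of_lt j.isLt)) (hpos _ j.isLt)
    · rw [if_neg h]
      by_cases hlt : (j:ℕ) < (k:ℕ)
      · rw [if_pos hlt]
        exact offdiag_entry c ξ K p hξ0 hξ1 j k hlt k.isLt
          (hpos _ (le_of_lt (lt_of_lt_of_le hlt (le_of_lt k.isLt))))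
          (hpos _ (lt_of_lt_of_le hlt (le_of_lt k.isLt)))
          (hpos _ (le_of_lt k.isLt)) (hpos _ k.isLt)
      · rw [if_neg hlt]
        have hkj : (k:ℕ) < (j:ℕ) := by
          rcases lt_or_ge (k:ℕ) (j:ℕ) with h' | h'
          · exact h'
          · exact absurd (Fin.ext (le_antisymm h' (not_lt.mp hlt))) h
        rw [offdiag_entry c ξ K p hξ0 hξ1 k j hkj j.isLt
          (hpos _ (le_of_lt (lt_of_lt_of_le hkj (le_of_lt j.isLt))))
          (hpos _ (lt_of_lt_of_le hkj (le_of_lt j.isLt)))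
          (hpos _ (le_of_lt j.isLt)) (hpos _ j.isLt), NN_symm]
  -- extend z to ℕ
  set ζ : ℕ → ℝ := fun m => if h : m < K then z ⟨m, h⟩ else 0 with hζ
  have hzz : ∀ j : Fin K, z j = ζ (j:ℕ) := by
    intro j
    simp only [hζ, j.isLt, dif_pos]
  have hQ : ∑ j, ∑ k, z j * SigmaMat c ξ K p j k * z k
      = c^2 * ∑ j ∈ Finset.range K, ∑ k ∈ Finset.range K, ζ j * NN ξ K p j k * ζ k := by
    rw [Finset.mul_sum, ← Fin.sum_univ_eq_sum_range
      (fun j => c^2 * ∑ k ∈ Finset.range K, ζ j * NN ξ K p j k * ζ k) K]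
    refine Finset.sum_congr rfl fun j _ => ?_
    rw [Finset.mul_sum, ← Fin.sum_univ_eq_sum_range
      (fun k => c^2 * (ζ (j:ℕ) * NN ξ K p (j:ℕ) k * ζ k)) K]
    refine Finset.sum_congr rfl fun k _ => ?_
    rw [hzz j, hzz k, hentry j k]
    ring
  rw [hQ, key]
  -- positivity
  have hblocks : ∀ m ∈ Finset.range K,
      0 ≤ (p (m+2) - p (m+1)) * (∑ k ∈ Finset.range K, ζ k * aa ξ p m k)^2
        + 2 * AA ξ p m * ζ m * (∑ k ∈ Finset.range K, ζ k * aa ξ p m k)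
        + ζ m^2 * TPQ ξ (p (m+1)) (p (m+2)) := by
    intro m hm
    have hmK := Finset.mem_range.mp hm
    have hΔ : 0 < p (m+2) - p (m+1) := sub_pos.mpr (hdel m hmK)
    have hcs : (AA ξ p m)^2 < (p (m+2) - p (m+1)) * TPQ ξ (p (m+1)) (p (m+2)) := by
      rw [AA]
      exact cs hξ0 hξ1 (hpos m hmK.le) (hdel m hmK)
    set α := ∑ k ∈ Finset.range K, ζ k * aa ξ p m k
    nlinarith [sq_nonneg ((p (m+2) - p (m+1)) * α + AA ξ p m * ζ m), sq_nonneg (ζ m), hΔ,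
      mul_nonneg (sq_nonneg (ζ m)) (le_of_lt (sub_pos.mpr hcs))]
  have hsum_pos : 0 < ∑ m ∈ Finset.range K,
      ((p (m+2) - p (m+1)) * (∑ k ∈ Finset.range K, ζ k * aa ξ p m k)^2
        + 2 * AA ξ p m * ζ m * (∑ k ∈ Finset.range K, ζ k * aa ξ p m k)
        + ζ m^2 * TPQ ξ (p (m+1)) (p (m+2))) := by
    obtain ⟨j, hj⟩ := Function.ne_iff.mp hz
    refine Finset.sum_pos' hblocks ⟨(j:ℕ), Finset.mem_range.mpr j.isLt, ?_⟩
    have hmK := j.isLt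
    have hΔ : 0 < p ((j:ℕ)+2) - p ((j:ℕ)+1) := sub_pos.mpr (hdel _ hmK)
    have hcs : (AA ξ p (j:ℕ))^2
        < (p ((j:ℕ)+2) - p ((j:ℕ)+1)) * TPQ ξ (p ((j:ℕ)+1)) (p ((j:ℕ)+2)) := by
      rw [AA]
      exact cs hξ0 hξ1 (hpos _ hmK.le) (hdel _ hmK)
    have hζj : ζ (j:ℕ) ≠ 0 := by
      rw [← hzz j]
      simpa using hj
    have hζsq : 0 < ζ (j:ℕ)^2 :=
      lt_of_le_of_ne (sq_nonneg _) (Ne.symm (pow_ne_zero 2 hζj))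
    set α := ∑ k ∈ Finset.range K, ζ k * aa ξ p (j:ℕ) k
    nlinarith [sq_nonneg ((p ((j:ℕ)+2) - p ((j:ℕ)+1)) * α + AA ξ p (j:ℕ) * ζ (j:ℕ)),
      mul_pos hζsq (sub_pos.mpr hcs), hΔ]
  have hg1 : 0 ≤ p 1 * (∑ j ∈ Finset.range K, ζ j * gg ξ p j)^2 :=
    mul_nonneg hp0.le (sq_nonneg _)
  have hg2 : 0 ≤ (1 - p (K+1)) * (∑ j ∈ Finset.range K, ζ j * vv ξ p j)^2 :=
    mul_nonneg (by linarith) (sq_nonneg _)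
  have hcpos : 0 < c^2 := by positivity
  exact mul_pos hcpos (by linarith)
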